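/- (Uniqueness part of the stratification theorem.) For a Boolean function f : 𝔽₂ⁿ → 𝔽₂ with f ≢ 0, the representation f = M₁(M₂(⋯(M_{r-1}(M_r·p_C + 1) + 1)⋯) + 1) + q — where each M_i is a nonconstant extended monomial, each variable appears in exactly one of M₁, …, M_r, p_C, the core polynomial p_C is identically 1 or non-canalizing, q ∈ 𝔽₂, and the exceptional-case conditions hold (if p_C ≡ 1 and r ≠ 1 then k_r ≥ 2; if p_C ≡ 1, r = 1, k₁ = 1 then q = 0) — is unique: the number of layers r, the extended monomials M₁, …, M_r (as functions, equivalently their variable sets and constants), the core polynomial p_C, and the constant q are all uniquely determined by f. -/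

import Mathlib

/-- A Boolean function `f` is essential in (depends on) the variable `v` if flipping
the value of `v` can change the value of `f`. -/
def EssentialIn {V : Type*} [DecidableEq V] (f : (V → ZMod 2) → ZMod 2) (v : V) : Prop :=
  ∃ x, f x ≠ f (Function.update x v (x v + 1))

/-- A Boolean function is canalizing if some variable `v` has an input value `a` that
forces the output value `b`. -/
def IsCanalizing {V : Type*} (f : (V → ZMod 2) → ZMod 2) : Prop :=
  ∃ (v : V) (a b : ZMod 2), ∀ x, x v = a → f x = b

/-- The extended monomial on the variable set `S` with constants `a`,
`M(x) = ∏_{j ∈ S} (x_j + a_j)`. -/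
def extMonomial {V : Type*} (S : Finset V) (a : V → ZMod 2) (x : V → ZMod 2) : ZMod 2 :=
  ∏ j ∈ S, (x j + a j)

/-- The nested form `M₁(M₂(⋯(M_{r-1}(M_r·p + 1) + 1)⋯) + 1)` determined by a list of
layers (variable sets) `L`, constants `a`, and a core polynomial `p`. For `L = []` it
is just `p`. -/
def nestedLayers {V : Type*} (a : V → ZMod 2) (p : (V → ZMod 2) → ZMod 2) :
    List (Finset V) → (V → ZMod 2) → ZMod 2
  | [], x => p x
  | [S], x => extMonomial S a x * p x
  | S :: T :: Ss, x => extMonomial S a x * (nestedLayers a p (T :: Ss) x + 1)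

/-- `IsStratification f L a p q` says that
`f = M₁(M₂(⋯(M_{r-1}(M_r·p_C + 1) + 1)⋯) + 1) + q` is a representation of `f` as in
the He–Macauley stratification theorem: the layers `Mᵢ = ∏_{j ∈ Sᵢ} (x_j + a_j)` are
nonconstant extended monomials in pairwise disjoint variable sets, the core polynomial
`p` is independent of all layer variables and is identically `1` or non-canalizing,
and the exceptional-case conditions hold (if `p ≡ 1` and `r ≠ 1` then `k_r ≥ 2`; if
`p ≡ 1`, `r = 1`, `k₁ = 1` then `q = 0`; and for `r = 0` the representation is
`f = p_C`, i.e. `q = 0`). -/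
def IsStratification {V : Type*} [DecidableEq V] (f : (V → ZMod 2) → ZMod 2)
    (L : List (Finset V)) (a : V → ZMod 2) (p : (V → ZMod 2) → ZMod 2) (q : ZMod 2) :
    Prop :=
  (∀ S ∈ L, S.Nonempty) ∧
  L.Pairwise Disjoint ∧
  (∀ S ∈ L, ∀ v ∈ S, ¬ EssentialIn p v) ∧
  (p = (fun _ => 1) ∨ ¬ IsCanalizing p) ∧
  (p = (fun _ => 1) → L.length ≠ 1 → ∀ S ∈ L.getLast?, 2 ≤ S.card) ∧
  (p = (fun _ => 1) → ∀ S, L = [S] → S.card = 1 → q = 0) ∧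
  (L = [] → q = 0) ∧
  f = fun x => nestedLayers a p L x + q

namespace StratAux
set_option linter.unusedSectionVars false

variable {V : Type*} [DecidableEq V]

lemma z2 (c d : ZMod 2) (h : c ≠ d) : c = d + 1 := by revert h; revert c d; decide

lemma nonEss_update (g : (V → ZMod 2) → ZMod 2) (v : V) (h : ¬ EssentialIn g v)
    (x : V → ZMod 2) (c : ZMod 2) : g (Function.update x v c) = g x := by
  unfold EssentialIn at h
  push_neg at h
  rcases eq_or_ne c (x v) with rfl | hc
  · rw [Function.update_eq_self]
  · rw [z2 c (x v) hc]; exact (h x).symm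

lemma agree_of_nonEss (g : (V → ZMod 2) → ZMod 2) (s : Finset V) (x y : V → ZMod 2)
    (h : ∀ v, x v ≠ y v → v ∈ s ∧ ¬ EssentialIn g v) : g x = g y := by
  induction s using Finset.induction_on generalizing x with
  | empty =>
    have hxy : x = y := funext fun v => by_contra fun hv => absurd (h v hv).1 (Finset.notMem_empty v)
    rw [hxy]
  | insert b s ha IH =>
    by_cases hxy : x b = y b
    · refine IH x (fun v hv => ⟨?_, (h v hv).2⟩)
      refine (Finset.mem_insert.mp (h v hv).1).resolve_left (fun he => hv ?_)
      rw [he]; exact hxy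
    · have hna := (h b hxy).2
      rw [(nonEss_update g b hna x (y b)).symm]
      refine IH (Function.update x b (y b)) (fun v hv => ?_)
      have hvb : v ≠ b := fun he => by subst he; simp at hv
      rw [Function.update_of_ne hvb] at hv
      exact ⟨(Finset.mem_insert.mp (h v hv).1).resolve_left hvb, (h v hv).2⟩

lemma extM_zero {S : Finset V} {a x : V → ZMod 2} {j : V} (hj : j ∈ S) (h : x j = a j) :
    extMonomial S a x = 0 :=
  Finset.prod_eq_zero hj (by rw [h]; exact (by decide : ∀ c : ZMod 2, c + c = 0) _)

lemma extM_one {S : Finset V} {a x : V → ZMod 2} (h : ∀ j ∈ S, x j = a j + 1) :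
    extMonomial S a x = 1 :=
  Finset.prod_eq_one fun j hj => by rw [h j hj]; exact (by decide : ∀ c : ZMod 2, c + 1 + c = 1) (a j)

lemma nested_cons (a : V → ZMod 2) (p : (V → ZMod 2) → ZMod 2) (S : Finset V)
    (rest : List (Finset V)) (x : V → ZMod 2) :
    nestedLayers a p (S :: rest) x =
      extMonomial S a x * (if rest = [] then p x else nestedLayers a p rest x + 1) := by
  cases rest with
  | nil => simp [nestedLayers]
  | cons T ss => simp [nestedLayers]

lemma nested_congr (a : V → ZMod 2) (p : (V → ZMod 2) → ZMod 2) (L : List (Finset V))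
    (x y : V → ZMod 2) (hL : ∀ T ∈ L, ∀ j ∈ T, x j = y j) (hp : p x = p y) :
    nestedLayers a p L x = nestedLayers a p L y := by
  induction L with
  | nil => exact hp
  | cons S rest IH =>
    rw [nested_cons, nested_cons]
    have hM : extMonomial S a x = extMonomial S a y :=
      Finset.prod_congr rfl (fun j hj => by rw [hL S (by simp) j hj])
    rw [hM, IH (fun T hT j hj => hL T (by simp [hT]) j hj), hp]

lemma nested_zero (a : V → ZMod 2) (p : (V → ZMod 2) → ZMod 2) (S : Finset V)
    (rest : List (Finset V)) (x : V → ZMod 2) {j : V} (hj : j ∈ S) (h : x j = a j) :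
    nestedLayers a p (S :: rest) x = 0 := by
  rw [nested_cons, extM_zero hj h, zero_mul]

lemma nested_exists_one (a : V → ZMod 2) (p : (V → ZMod 2) → ZMod 2) (L : List (Finset V))
    (hL : L ≠ []) (hne : ∀ S ∈ L, S.Nonempty) (hdisj : L.Pairwise Disjoint)
    (hp : ∀ S ∈ L, ∀ v ∈ S, ¬ EssentialIn p v)
    (y : V → ZMod 2) (hy : p y = 1) :
    ∃ x, nestedLayers a p L x = 1 := by
  cases L with
  | nil => exact absurd rfl hL
  | cons S rest =>
    cases rest with
    | nil =>
      refine ⟨fun j => if j ∈ S then a j + 1 else y j, ?_⟩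
      have h1 : extMonomial S a (fun j => if j ∈ S then a j + 1 else y j) = 1 :=
        extM_one (fun j hj => by simp [hj])
      have h2 : p (fun j => if j ∈ S then a j + 1 else y j) = p y := by
        refine agree_of_nonEss p S _ y (fun v hv => ?_)
        by_cases hv' : v ∈ S
        · exact ⟨hv', hp S (by simp) v hv'⟩
        · simp [hv'] at hv
      rw [nested_cons, if_pos rfl, h1, h2, hy, one_mul]
    | cons T ss =>
      obtain ⟨v, hv⟩ := hne T (by simp)
      have hvS : v ∉ S := by
        have hd : Disjoint S T := (List.pairwise_cons.mp hdisj).1 T (by simp)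
        exact fun hvs => (Finset.disjoint_left.mp hd hvs) hv
      refine ⟨fun j => if j ∈ S then a j + 1 else if j ∈ T then a j else y j, ?_⟩
      have hzero : nestedLayers a p (T :: ss) (fun j => if j ∈ S then a j + 1 else if j ∈ T then a j else y j) = 0 :=
        nested_zero a p T ss _ hv (by simp [hvS, hv])
      rw [nested_cons, if_neg (by simp), hzero,
        extM_one (fun j hj => by simp [hj])]
      decide

lemma nested_exists_zero (a : V → ZMod 2) (p : (V → ZMod 2) → ZMod 2) (S : Finset V)
    (rest : List (Finset V)) (hne : S.Nonempty) :
    ∃ x, nestedLayers a p (S :: rest) x = 0 := by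
  obtain ⟨v, hv⟩ := hne
  exact ⟨a, nested_zero a p S rest a hv rfl⟩

lemma z2a : ∀ u v : ZMod 2, u + v = v → u = 0 := by decide
lemma z2b : ∀ u : ZMod 2, u + 1 = 0 → u = 1 := by decide
lemma z2c : ∀ u : ZMod 2, u + 1 = 1 → u = 0 := by decide
lemma z2e : ∀ c : ZMod 2, c + 1 + c = 1 := by decide
lemma z2f : (0 : ZMod 2) ≠ 1 := by decide

lemma canal_char (a : V → ZMod 2) (p : (V → ZMod 2) → ZMod 2) (q : ZMod 2)
    (S : Finset V) (rest : List (Finset V))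
    (hne : ∀ T ∈ S :: rest, T.Nonempty)
    (hdisj : (S :: rest).Pairwise Disjoint)
    (hpind : ∀ T ∈ S :: rest, ∀ v ∈ T, ¬ EssentialIn p v)
    (hpc : p = (fun _ => 1) ∨ ¬ IsCanalizing p)
    (hlast : p = (fun _ => 1) → (S :: rest).length ≠ 1 → ∀ T ∈ (S :: rest).getLast?, 2 ≤ T.card)
    (hexc : ¬ (p = (fun _ => 1) ∧ rest = [] ∧ S.card = 1))
    (w : V) (α β : ZMod 2)
    (hcan : ∀ x, x w = α → nestedLayers a p (S :: rest) x + q = β) :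
    w ∈ S ∧ α = a w ∧ β = q := by
  obtain ⟨v₀, hv₀⟩ := hne S (by simp)
  have hdSrest : ∀ U ∈ rest, Disjoint S U := (List.pairwise_cons.mp hdisj).1
  have hdrest : rest.Pairwise Disjoint := (List.pairwise_cons.mp hdisj).2
  have hpy : ∃ y, p y = 1 := by
    rcases hpc with hp1 | hnc
    · exact ⟨fun _ => 0, by rw [hp1]⟩
    · by_contra hno
      push_neg at hno
      refine hnc ⟨v₀, 0, 0, fun x _ => ?_⟩
      rcases (by decide : ∀ c : ZMod 2, c = 0 ∨ c = 1) (p x) with h | h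
      · exact h
      · exact absurd h (hno x)
  by_cases hA : w ∈ S ∧ α = a w
  · have h0 : nestedLayers a p (S :: rest) a = 0 := nested_zero a p S rest a hA.1 rfl
    have h1 := hcan a hA.2.symm
    rw [h0, zero_add] at h1
    exact ⟨hA.1, hA.2, h1.symm⟩
  exfalso
  by_cases hSw : S = {w}
  · -- singleton head case
    have hwS : w ∈ S := by rw [hSw]; exact Finset.mem_singleton_self w
    have hαw : α = a w + 1 := z2 _ _ (fun h => hA ⟨hwS, h⟩)
    have hGval : ∀ x, x w = α →
        (if rest = [] then p x else nestedLayers a p rest x + 1) + q = β := by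
      intro x hx
      have h1 := hcan x hx
      rw [nested_cons] at h1
      have hM : extMonomial S a x = 1 := by
        rw [hSw, extMonomial, Finset.prod_singleton, hx, hαw]; exact z2e (a w)
      rwa [hM, one_mul] at h1
    cases rest with
    | nil =>
      have hpconst : ∀ z, p z + q = β := by
        intro z
        have h1 := hGval (Function.update z w α) (Function.update_self _ _ _)
        rw [if_pos rfl] at h1
        rwa [nonEss_update p w (hpind S (by simp) w hwS) z α] at h1
      rcases hpc with hp1 | hnc
      · exact hexc ⟨hp1, rfl, by rw [hSw]; exact Finset.card_singleton w⟩
      · exact hnc ⟨w, 0, β + q, fun x _ =>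
          (by decide : ∀ u v r : ZMod 2, u + v = r → u = r + v) _ _ _ (hpconst x)⟩
    | cons T ss =>
      have hnconst : ∀ z, nestedLayers a p (T :: ss) z = β + q + 1 := by
        intro z
        have h1 := hGval (Function.update z w α) (Function.update_self _ _ _)
        rw [if_neg (by simp)] at h1
        have h2 : nestedLayers a p (T :: ss) (Function.update z w α)
            = nestedLayers a p (T :: ss) z := by
          refine nested_congr a p (T :: ss) _ _ (fun U hU j hj => ?_)
            (nonEss_update p w (hpind S (by simp) w hwS) z α)
          have hjw : j ≠ w := fun he => by
            subst he
            exact (Finset.disjoint_right.mp (hdSrest U hU) hj) hwS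
          exact Function.update_of_ne hjw _ _
        rw [h2] at h1
        exact (by decide : ∀ u c d : ZMod 2, u + 1 + c = d → u = d + c + 1) _ _ _ h1
      obtain ⟨x1, hx1⟩ := nested_exists_one a p (T :: ss) (by simp)
        (fun U hU => hne U (by simp [hU])) hdrest
        (fun U hU v hv => hpind U (by simp [hU]) v hv) hpy.choose hpy.choose_spec
      obtain ⟨x2, hx2⟩ := nested_exists_zero a p T ss (hne T (by simp))
      rw [hnconst x1] at hx1
      rw [hnconst x2] at hx2
      rw [hx2] at hx1
      exact z2f hx1
  · -- head not equal to {w}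
    have hv : ∃ v ∈ S, v ≠ w := by
      by_contra hno
      push_neg at hno
      have hw : w ∈ S := (hno v₀ hv₀) ▸ hv₀
      exact hSw (Finset.eq_singleton_iff_unique_mem.mpr ⟨hw, hno⟩)
    obtain ⟨v, hvS, hvw⟩ := hv
    have hβ : β = q := by
      set x0 : V → ZMod 2 := Function.update (Function.update (fun _ => 0) w α) v (a v)
        with hx0def
      have hx0w : x0 w = α := by
        rw [hx0def, Function.update_of_ne (Ne.symm hvw), Function.update_self]
      have hx0v : x0 v = a v := by rw [hx0def, Function.update_self]
      have h1 := hcan x0 hx0w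
      rw [nested_zero a p S rest x0 hvS hx0v, zero_add] at h1
      exact h1.symm
    subst hβ
    have hn0 : ∀ x, x w = α → nestedLayers a p (S :: rest) x = 0 := by
      intro x hx
      exact z2a _ _ (hcan x hx)
    have hαw' : w ∈ S → α = a w + 1 := fun hw => z2 _ _ (fun h => hA ⟨hw, h⟩)
    have hGz : ∀ x : V → ZMod 2, x w = α →
        (if rest = [] then p (fun j => if j ∈ S then a j + 1 else x j)
          else nestedLayers a p rest (fun j => if j ∈ S then a j + 1 else x j) + 1) = 0 := by
      intro x hx
      set xS : V → ZMod 2 := fun j => if j ∈ S then a j + 1 else x j with hxSdef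
      have hxSw : xS w = α := by
        by_cases hw : w ∈ S
        · rw [hxSdef]; simp only [hw, if_pos]; exact (hαw' hw).symm
        · rw [hxSdef]; simp only [hw, if_neg, if_false]; exact hx
      have h1 := hn0 xS hxSw
      rw [nested_cons, extM_one (fun j hj => by rw [hxSdef]; simp [hj]), one_mul] at h1
      exact h1
    have hagreeS : ∀ x : V → ZMod 2, ∀ g : (V → ZMod 2) → ZMod 2,
        (∀ u ∈ S, ¬ EssentialIn g u) →
        g (fun j => if j ∈ S then a j + 1 else x j) = g x := by
      intro x g hg
      refine agree_of_nonEss g S _ x (fun u hu => ?_)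
      by_cases hu' : u ∈ S
      · exact ⟨hu', hg u hu'⟩
      · simp [hu'] at hu
    cases rest with
    | nil =>
      have hp0 : ∀ x, x w = α → p x = 0 := by
        intro x hx
        have h1 := hGz x hx
        rw [if_pos rfl] at h1
        rw [hagreeS x p (hpind S (by simp))] at h1
        exact h1
      rcases hpc with hp1 | hnc
      · have := hp0 (fun _ => α) rfl
        rw [hp1] at this
        exact z2f this.symm
      · exact hnc ⟨w, α, 0, hp0⟩
    | cons T ss =>
      have hn1 : ∀ x, x w = α → nestedLayers a p (T :: ss) x = 1 := by
        intro x hx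
        have h1 := hGz x hx
        rw [if_neg (by simp)] at h1
        have h2 := z2b _ h1
        rw [nested_congr a p (T :: ss) _ x (fun U hU j hj => ?_)
          (hagreeS x p (hpind S (by simp)))] at h2
        · exact h2
        · have hjS : j ∉ S := Finset.disjoint_right.mp (hdSrest U hU) hj
          simp [hjS]
      by_cases hT : ∃ u ∈ T, α = a u ∨ u ≠ w
      · obtain ⟨u, huT, hucase⟩ := hT
        set x3 : V → ZMod 2 := Function.update (fun _ => α) u (a u) with hx3def
        have hx3u : x3 u = a u := by rw [hx3def, Function.update_self]
        have hx3w : x3 w = α := by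
          rcases eq_or_ne w u with rfl | hne'
          · rcases hucase with h | h
            · rw [hx3u]; exact h.symm
            · exact absurd rfl h
          · rw [hx3def, Function.update_of_ne hne']
        have h1 := hn1 x3 hx3w
        rw [nested_zero a p T ss x3 huT hx3u] at h1
        exact z2f h1
      · push_neg at hT
        obtain ⟨u₀, hu₀⟩ := hne T (by simp)
        have hwT : w ∈ T := (hT u₀ hu₀).2 ▸ hu₀
        have hαwT : α = a w + 1 := z2 _ _ (hT w hwT).1
        have hTw : T = {w} := Finset.eq_singleton_iff_unique_mem.mpr
          ⟨hwT, fun u hu => (hT u hu).2⟩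
        have hZ : ∀ x, x w = α →
            (if ss = [] then p x else nestedLayers a p ss x + 1) = 1 := by
          intro x hx
          have h1 := hn1 x hx
          rw [nested_cons] at h1
          have hM : extMonomial T a x = 1 := by
            rw [hTw, extMonomial, Finset.prod_singleton, hx, hαwT]; exact z2e (a w)
          rwa [hM, one_mul] at h1
        have hpnew : ¬ EssentialIn p w := hpind T (by simp) w hwT
        cases ss with
        | nil =>
          have hp1 : p = (fun _ => 1) := by
            funext z
            have h1 := hZ (Function.update z w α) (Function.update_self _ _ _)
            rw [if_pos rfl, nonEss_update p w hpnew z α] at h1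
            exact h1
          have h2 := hlast hp1 (by simp) T (by simp [List.getLast?])
          rw [hTw, Finset.card_singleton] at h2
          omega
        | cons U ss2 =>
          have hn2 : ∀ x, x w = α → nestedLayers a p (U :: ss2) x = 0 := by
            intro x hx
            have h1 := hZ x hx
            rw [if_neg (by simp)] at h1
            exact z2c _ h1
          have hdT : ∀ W ∈ U :: ss2, Disjoint T W := (List.pairwise_cons.mp hdrest).1
          obtain ⟨x1, hx1⟩ := nested_exists_one a p (U :: ss2) (by simp)
            (fun W hW => hne W (by simp [hW])) (List.pairwise_cons.mp hdrest).2
            (fun W hW v hv => hpind W (by simp [hW]) v hv) hpy.choose hpy.choose_spec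
          have h2 : nestedLayers a p (U :: ss2) (Function.update x1 w α)
              = nestedLayers a p (U :: ss2) x1 := by
            refine nested_congr a p (U :: ss2) _ _ (fun W hW j hj => ?_)
              (nonEss_update p w hpnew x1 α)
            have hjw : j ≠ w := fun he => by
              subst he
              exact (Finset.disjoint_right.mp (hdT W hW) hj) hwT
            exact Function.update_of_ne hjw _ _
          have h3 := hn2 (Function.update x1 w α) (Function.update_self _ _ _)
          rw [h2, hx1] at h3
          exact z2f h3.symm

lemma pexists_one (p : (V → ZMod 2) → ZMod 2) (hpc : p = (fun _ => 1) ∨ ¬ IsCanalizing p)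
    (v₀ : V) : ∃ y, p y = 1 := by
  rcases hpc with hp1 | hnc
  · exact ⟨fun _ => 0, by rw [hp1]⟩
  · by_contra hno
    push_neg at hno
    refine hnc ⟨v₀, 0, 0, fun x _ => ?_⟩
    rcases (by decide : ∀ c : ZMod 2, c = 0 ∨ c = 1) (p x) with h | h
    · exact h
    · exact absurd h (hno x)

lemma agreeS (a x : V → ZMod 2) (S : Finset V) (g : (V → ZMod 2) → ZMod 2)
    (hg : ∀ u ∈ S, ¬ EssentialIn g u) :
    g (fun j => if j ∈ S then a j + 1 else x j) = g x := by
  refine agree_of_nonEss g S _ x (fun u hu => ?_)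
  by_cases hu' : u ∈ S
  · exact ⟨hu', hg u hu'⟩
  · simp [hu'] at hu

lemma no_mix (f : (V → ZMod 2) → ZMod 2) (a a' : V → ZMod 2)
    (p p' : (V → ZMod 2) → ZMod 2) (q q' : ZMod 2)
    (S' : Finset V) (rest' : List (Finset V))
    (hs : IsStratification f [] a p q) (hs' : IsStratification f (S' :: rest') a' p' q') :
    False := by
  obtain ⟨hne, hdisj, hpind, hpc, hlast, hexc1, hq0, hfeq⟩ := hs
  obtain ⟨hne', hdisj', hpind', hpc', hlast', hexc1', hq0', hfeq'⟩ := hs'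
  obtain ⟨v, hv⟩ := hne' S' (by simp)
  have hfp : ∀ x, f x = p x := by
    intro x
    rw [hfeq]
    show nestedLayers a p [] x + q = p x
    rw [hq0 rfl, add_zero]
    rfl
  have hfcan : ∀ x, x v = a' v → f x = q' := by
    intro x hx
    rw [hfeq']
    show nestedLayers a' p' (S' :: rest') x + q' = q'
    rw [nested_zero a' p' S' rest' x hv hx, zero_add]
  rcases hpc with hp1 | hnc
  · have hf1 : ∀ x, f x = 1 := fun x => by rw [hfp x, hp1]
    have hq'1 : q' = 1 := by
      have h1 := hfcan (fun _ => a' v) rfl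
      rw [hf1] at h1
      exact h1.symm
    obtain ⟨y, hy⟩ := pexists_one p' hpc' v
    obtain ⟨x1, hx1⟩ := nested_exists_one a' p' (S' :: rest') (by simp) hne' hdisj' hpind' y hy
    have h2 := congrFun hfeq' x1
    rw [hf1 x1, hx1, hq'1] at h2
    exact (by decide : (1 : ZMod 2) ≠ 1 + 1) h2
  · exact hnc ⟨v, a' v, q', fun x hx => by rw [← hfp x]; exact hfcan x hx⟩

lemma strat_unique : ∀ (L : List (Finset V)) (f : (V → ZMod 2) → ZMod 2),
    f ≠ (fun _ => 0) → ∀ (L' : List (Finset V)) (a a' : V → ZMod 2)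
    (p p' : (V → ZMod 2) → ZMod 2) (q q' : ZMod 2),
    IsStratification f L a p q → IsStratification f L' a' p' q' →
    L = L' ∧ L.map (fun S => extMonomial S a) = L'.map (fun S => extMonomial S a') ∧
      p = p' ∧ q = q' := by
  intro L
  induction L with
  | nil =>
    intro f hf L' a a' p p' q q' hs hs'
    cases L' with
    | nil =>
      obtain ⟨_, _, _, _, _, _, hq0, hfeq⟩ := hs
      obtain ⟨_, _, _, _, _, _, hq0', hfeq'⟩ := hs'
      refine ⟨rfl, rfl, ?_, (hq0 rfl).trans (hq0' rfl).symm⟩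
      funext x
      have h1 := congrFun hfeq x
      have h2 := congrFun hfeq' x
      rw [hq0 rfl] at h1
      rw [hq0' rfl] at h2
      rw [add_zero] at h1 h2
      exact h1.symm.trans h2
    | cons S' rest' => exact (no_mix f a a' p p' q q' S' rest' hs hs').elim
  | cons S rest IH =>
    intro f hf L' a a' p p' q q' hs hs'
    cases L' with
    | nil => exact (no_mix f a' a p' p q' q S rest hs' hs).elim
    | cons S' rest' =>
      obtain ⟨hne, hdisj, hpind, hpc, hlast, hexc1, hq0, hfeq⟩ := hs
      obtain ⟨hne', hdisj', hpind', hpc', hlast', hexc1', hq0', hfeq'⟩ := hs'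
      obtain ⟨v₀, hv₀⟩ := hne S (by simp)
      obtain ⟨v₀', hv₀'⟩ := hne' S' (by simp)
      by_cases hE : p = (fun _ => 1) ∧ rest = [] ∧ S.card = 1
      · obtain ⟨hp1, hrnil, hcard1⟩ := hE
        subst hrnil
        obtain ⟨w, hSw2⟩ := Finset.card_eq_one.mp hcard1
        have hqz : q = 0 := hexc1 hp1 S rfl hcard1
        have hfval : ∀ x, f x = x w + a w := by
          intro x
          have h0 : f x = nestedLayers a p [S] x + q := congrFun hfeq x
          rw [h0]
          show extMonomial S a x * p x + q = x w + a w
          simp only [hp1, hqz, hSw2, extMonomial, Finset.prod_singleton, mul_one, add_zero]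
        by_cases hE' : p' = (fun _ => 1) ∧ rest' = [] ∧ S'.card = 1
        · obtain ⟨hp1', hrnil', hcard1'⟩ := hE'
          subst hrnil'
          obtain ⟨w', hSw2'⟩ := Finset.card_eq_one.mp hcard1'
          have hqz' : q' = 0 := hexc1' hp1' S' rfl hcard1'
          have hfval' : ∀ x, f x = x w' + a' w' := by
            intro x
            have h0 : f x = nestedLayers a' p' [S'] x + q' := congrFun hfeq' x
            rw [h0]
            show extMonomial S' a' x * p' x + q' = x w' + a' w'
            simp only [hp1', hqz', hSw2', extMonomial, Finset.prod_singleton, mul_one, add_zero]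
          have hww : w = w' := by
            by_contra hne2
            have h1 := (hfval (Function.update (fun _ => 0) w 1)).symm.trans
              (hfval' (Function.update (fun _ => 0) w 1))
            have h2 := (hfval (fun _ => 0)).symm.trans (hfval' (fun _ => 0))
            rw [Function.update_self, Function.update_of_ne (Ne.symm hne2)] at h1
            rw [zero_add] at h1 h2 h2
            rw [← h2] at h1
            exact (by decide : ∀ c : ZMod 2, 1 + c ≠ c) (a w) h1
          subst hww
          have haw : a w = a' w := by
            have h2 := (hfval (fun _ => 0)).symm.trans (hfval' (fun _ => 0))
            rwa [zero_add, zero_add] at h2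
          refine ⟨by rw [hSw2, hSw2'], ?_, hp1.trans hp1'.symm, hqz.trans hqz'.symm⟩
          simp only [List.map_cons, List.map_nil]
          congr 1
          funext x
          rw [hSw2, hSw2', extMonomial, extMonomial, Finset.prod_singleton,
            Finset.prod_singleton, haw]
        · have c1 := canal_char a' p' q' S' rest' hne' hdisj' hpind' hpc' hlast' hE'
            w (a w + 1) 1 (fun x hx => (congrFun hfeq' x).symm.trans
              (by rw [hfval x, hx]; exact z2e (a w)))
          have c2 := canal_char a' p' q' S' rest' hne' hdisj' hpind' hpc' hlast' hE'
            w (a w) 0 (fun x hx => (congrFun hfeq' x).symm.trans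
              (by rw [hfval x, hx]; exact (by decide : ∀ c : ZMod 2, c + c = 0) (a w)))
          exact absurd (c2.2.2.trans c1.2.2.symm) z2f
      · by_cases hE' : p' = (fun _ => 1) ∧ rest' = [] ∧ S'.card = 1
        · obtain ⟨hp1', hrnil', hcard1'⟩ := hE'
          subst hrnil'
          obtain ⟨w, hSw2⟩ := Finset.card_eq_one.mp hcard1'
          have hqz' : q' = 0 := hexc1' hp1' S' rfl hcard1'
          have hfval : ∀ x, f x = x w + a' w := by
            intro x
            have h0 : f x = nestedLayers a' p' [S'] x + q' := congrFun hfeq' x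
            rw [h0]
            show extMonomial S' a' x * p' x + q' = x w + a' w
            simp only [hp1', hqz', hSw2, extMonomial, Finset.prod_singleton, mul_one, add_zero]
          have c1 := canal_char a p q S rest hne hdisj hpind hpc hlast hE
            w (a' w + 1) 1 (fun x hx => (congrFun hfeq x).symm.trans
              (by rw [hfval x, hx]; exact z2e (a' w)))
          have c2 := canal_char a p q S rest hne hdisj hpind hpc hlast hE
            w (a' w) 0 (fun x hx => (congrFun hfeq x).symm.trans
              (by rw [hfval x, hx]; exact (by decide : ∀ c : ZMod 2, c + c = 0) (a' w)))
          exact absurd (c2.2.2.trans c1.2.2.symm) z2f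
        · -- main case: neither exceptional
          have key : ∀ v ∈ S, v ∈ S' ∧ a v = a' v ∧ q = q' := by
            intro v hv
            refine canal_char a' p' q' S' rest' hne' hdisj' hpind' hpc' hlast' hE'
              v (a v) q (fun x hx => (congrFun hfeq' x).symm.trans ?_)
            rw [congrFun hfeq x, nested_zero a p S rest x hv hx, zero_add]
          have key' : ∀ v ∈ S', v ∈ S ∧ a' v = a v ∧ q' = q := by
            intro v hv
            refine canal_char a p q S rest hne hdisj hpind hpc hlast hE
              v (a' v) q' (fun x hx => (congrFun hfeq x).symm.trans ?_)
            rw [congrFun hfeq' x, nested_zero a' p' S' rest' x hv hx, zero_add]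
          have hSS : S = S' :=
            Finset.Subset.antisymm (fun v hv => (key v hv).1) (fun v hv => (key' v hv).1)
          have hq : q = q' := (key v₀ hv₀).2.2
          have hM : extMonomial S a = extMonomial S' a' := by
            funext x
            rw [← hSS]
            exact Finset.prod_congr rfl (fun j hj => by rw [(key j hj).2.1])
          have hdSrest : ∀ U ∈ rest, Disjoint S U := (List.pairwise_cons.mp hdisj).1
          have hdSrest' : ∀ U ∈ rest', Disjoint S U := by
            rw [hSS]; exact (List.pairwise_cons.mp hdisj').1
          have hGG : ∀ x, (if rest = [] then p x else nestedLayers a p rest x + 1)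
              = (if rest' = [] then p' x else nestedLayers a' p' rest' x + 1) := by
            intro x
            set xS : V → ZMod 2 := fun j => if j ∈ S then a j + 1 else x j with hxSdef
            have h1 : nestedLayers a p (S :: rest) xS + q
                = nestedLayers a' p' (S' :: rest') xS + q' :=
              (congrFun hfeq xS).symm.trans (congrFun hfeq' xS)
            rw [nested_cons, nested_cons] at h1
            have hMx : extMonomial S a xS = 1 :=
              extM_one (fun j hj => by rw [hxSdef]; simp [hj])
            rw [hMx, ← hM, hMx, one_mul, one_mul, ← hq] at h1
            have h2 := add_right_cancel h1
            have h3 : (if rest = [] then p xS else nestedLayers a p rest xS + 1)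
                = (if rest = [] then p x else nestedLayers a p rest x + 1) := by
              by_cases hr : rest = []
              · rw [if_pos hr, if_pos hr, hxSdef]
                exact agreeS a x S p (hpind S (by simp))
              · rw [if_neg hr, if_neg hr, hxSdef]
                congr 1
                refine nested_congr a p rest _ x (fun U hU j hj => ?_)
                  (agreeS a x S p (hpind S (by simp)))
                have hjS : j ∉ S := Finset.disjoint_right.mp (hdSrest U hU) hj
                simp [hjS]
            have h4 : (if rest' = [] then p' xS else nestedLayers a' p' rest' xS + 1)
                = (if rest' = [] then p' x else nestedLayers a' p' rest' x + 1) := by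
              by_cases hr : rest' = []
              · rw [if_pos hr, if_pos hr, hxSdef]
                refine agreeS a x S p' ?_
                rw [hSS]; exact hpind' S' (by simp)
              · rw [if_neg hr, if_neg hr, hxSdef]
                congr 1
                refine nested_congr a' p' rest' _ x (fun U hU j hj => ?_) ?_
                · have hjS : j ∉ S := Finset.disjoint_right.mp (hdSrest' U hU) hj
                  simp [hjS]
                · refine agreeS a x S p' ?_
                  rw [hSS]; exact hpind' S' (by simp)
            rw [← h3, ← h4]
            exact h2
          cases rest with
          | nil =>
            cases rest' with
            | nil =>
              have hpp : p = p' := by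
                funext x
                have := hGG x
                rwa [if_pos rfl, if_pos rfl] at this
              exact ⟨by rw [hSS], by simp [hM], hpp, hq⟩
            | cons T' ss' =>
              exfalso
              have hpval : ∀ x, p x = nestedLayers a' p' (T' :: ss') x + 1 := by
                intro x
                have := hGG x
                rwa [if_pos rfl, if_neg (by simp)] at this
              rcases hpc with hp1 | hnc
              · obtain ⟨y, hy⟩ := pexists_one p' hpc' v₀
                obtain ⟨x1, hx1⟩ := nested_exists_one a' p' (T' :: ss') (by simp)
                  (fun U hU => hne' U (by simp [hU])) (List.pairwise_cons.mp hdisj').2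
                  (fun U hU u hu => hpind' U (by simp [hU]) u hu) y hy
                have h1 := hpval x1
                rw [hp1, hx1] at h1
                exact (by decide : (1 : ZMod 2) ≠ 1 + 1) h1
              · obtain ⟨u, hu⟩ := hne' T' (by simp)
                refine hnc ⟨u, a' u, 1, fun x hx => ?_⟩
                rw [hpval x, nested_zero a' p' T' ss' x hu hx, zero_add]
          | cons T ss =>
            cases rest' with
            | nil =>
              exfalso
              have hpval : ∀ x, p' x = nestedLayers a p (T :: ss) x + 1 := by
                intro x
                have := hGG x
                rw [if_neg (by simp), if_pos rfl] at this
                exact this.symm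
              rcases hpc' with hp1 | hnc
              · obtain ⟨y, hy⟩ := pexists_one p hpc v₀
                obtain ⟨x1, hx1⟩ := nested_exists_one a p (T :: ss) (by simp)
                  (fun U hU => hne U (by simp [hU])) (List.pairwise_cons.mp hdisj).2
                  (fun U hU u hu => hpind U (by simp [hU]) u hu) y hy
                have h1 := hpval x1
                rw [hp1, hx1] at h1
                exact (by decide : (1 : ZMod 2) ≠ 1 + 1) h1
              · obtain ⟨u, hu⟩ := hne T (by simp)
                refine hnc ⟨u, a u, 1, fun x hx => ?_⟩
                rw [hpval x, nested_zero a p T ss x hu hx, zero_add]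
            | cons T' ss' =>
              have hgg : ∀ x, nestedLayers a p (T :: ss) x = nestedLayers a' p' (T' :: ss') x := by
                intro x
                have := hGG x
                rw [if_neg (by simp), if_neg (by simp)] at this
                exact add_right_cancel this
              obtain ⟨y, hy⟩ := pexists_one p hpc v₀
              obtain ⟨x1, hx1⟩ := nested_exists_one a p (T :: ss) (by simp)
                (fun U hU => hne U (by simp [hU])) (List.pairwise_cons.mp hdisj).2
                (fun U hU u hu => hpind U (by simp [hU]) u hu) y hy
              have hgne : (fun x => nestedLayers a p (T :: ss) x) ≠ (fun _ => 0) := by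
                intro h
                have := congrFun h x1
                rw [hx1] at this
                exact (by decide : (1 : ZMod 2) ≠ 0) this
              have hstr1 : IsStratification (fun x => nestedLayers a p (T :: ss) x)
                  (T :: ss) a p 0 := by
                refine ⟨fun U hU => hne U (by simp [hU]), (List.pairwise_cons.mp hdisj).2,
                  fun U hU u hu => hpind U (by simp [hU]) u hu, hpc, ?_,
                  fun _ _ _ _ => rfl, fun _ => rfl, ?_⟩
                · intro hp1 _
                  have h5 := hlast hp1 (by simp)
                  intro U hU
                  exact h5 U (by rw [List.getLast?_cons_cons]; exact hU)
                · funext x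
                  rw [add_zero]
              have hstr2 : IsStratification (fun x => nestedLayers a p (T :: ss) x)
                  (T' :: ss') a' p' 0 := by
                refine ⟨fun U hU => hne' U (by simp [hU]), (List.pairwise_cons.mp hdisj').2,
                  fun U hU u hu => hpind' U (by simp [hU]) u hu, hpc', ?_,
                  fun _ _ _ _ => rfl, fun _ => rfl, ?_⟩
                · intro hp1 _
                  have h5 := hlast' hp1 (by simp)
                  intro U hU
                  exact h5 U (by rw [List.getLast?_cons_cons]; exact hU)
                · funext x
                  rw [add_zero]
                  exact hgg x
              obtain ⟨hre, hrm, hrp, _⟩ := IH (fun x => nestedLayers a p (T :: ss) x) hgne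
                (T' :: ss') a a' p p' 0 0 hstr1 hstr2
              refine ⟨by rw [hSS, hre], ?_, hrp, hq⟩
              simp only [List.map_cons] at hrm ⊢
              rw [hM, hre] at *
              exact hrm ▸ rfl

end StratAux

/-- **uniqueness part of the stratification theorem.** For `f ≢ 0`, the
stratified representation is unique: the list of layers (their variable sets), the
extended monomials `M₁, …, M_r` as functions, the core polynomial `p_C`, and the
constant `q` are all uniquely determined by `f`. -/
theorem stmt_8 (n : ℕ) (f : (Fin n → ZMod 2) → ZMod 2) (hf : f ≠ fun _ => 0)
    (L L' : List (Finset (Fin n))) (a a' : Fin n → ZMod 2)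
    (p p' : (Fin n → ZMod 2) → ZMod 2) (q q' : ZMod 2)
    (h : IsStratification f L a p q) (h' : IsStratification f L' a' p' q') :
    L = L' ∧
    L.map (fun S => extMonomial S a) = L'.map (fun S => extMonomial S a') ∧
    p = p' ∧ q = q' :=
  StratAux.strat_unique L f hf L' a a' p p' q q' h h'
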